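/- Let n ≥ 1 and let p_1,…,p_n, q_1,…,q_n, r_1,…,r_n be natural numbers with r_i ≥ 1 for all i. Then the abelianization of the group G_E(p,q,r) is isomorphic to ℤ if and only if exactly one of the two sums p_1 + ⋯ + p_n and q_1 + ⋯ + q_n equals 0. -/

import Mathlib

/-- The relators of the echinus group `G_E(p,q,r) = ⟨b_1,…,b_n, t | b_j^{2^{r_j}} = 1
(1 ≤ j ≤ n), b_i^{2^{p_i}} = b_{i+1}^{2^{q_i}} (1 ≤ i ≤ n−1),
t⁻¹ b_n^{2^{p_n}} t = b_1^{2^{q_n}}⟩`, where `some i` is `b_{i+1}` and `none` is `t`. -/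
def echinusRels (n : ℕ) (hn : 0 < n) (p q r : Fin n → ℕ) :
    Set (FreeGroup (Option (Fin n))) :=
  {x | ∃ j : Fin n, x = FreeGroup.of (some j) ^ 2 ^ r j} ∪
  {x | ∃ i j : Fin n, (i : ℕ) + 1 = (j : ℕ) ∧
      x = FreeGroup.of (some i) ^ 2 ^ p i * (FreeGroup.of (some j) ^ 2 ^ q i)⁻¹} ∪
  {(FreeGroup.of none)⁻¹ *
      FreeGroup.of (some ⟨n - 1, Nat.sub_lt hn Nat.one_pos⟩) ^
        2 ^ p ⟨n - 1, Nat.sub_lt hn Nat.one_pos⟩ *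
      FreeGroup.of none *
      (FreeGroup.of (some ⟨0, hn⟩) ^ 2 ^ q ⟨n - 1, Nat.sub_lt hn Nat.one_pos⟩)⁻¹}

namespace Ech

variable {n : ℕ} {hn : 0 < n} {p q r : Fin n → ℕ}

lemma rel_one {x : FreeGroup (Option (Fin n))} (hx : x ∈ echinusRels n hn p q r) :
    PresentedGroup.mk (echinusRels n hn p q r) x = 1 := by
  have : x ∈ Subgroup.normalClosure (echinusRels n hn p q r) :=
    Subgroup.subset_normalClosure hx
  exact (QuotientGroup.eq_one_iff x).2 this

lemma R1 (j : Fin n) :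
    (PresentedGroup.of (rels := echinusRels n hn p q r) (some j)) ^ 2 ^ r j = 1 := by
  have hx : (FreeGroup.of (some j) : FreeGroup (Option (Fin n))) ^ 2 ^ r j
      ∈ echinusRels n hn p q r := Or.inl (Or.inl ⟨j, rfl⟩)
  have := rel_one (p := p) (q := q) hx
  rw [map_pow] at this
  exact this

lemma R2 (i j : Fin n) (hij : (i : ℕ) + 1 = (j : ℕ)) :
    (PresentedGroup.of (rels := echinusRels n hn p q r) (some i)) ^ 2 ^ p i =
    (PresentedGroup.of (rels := echinusRels n hn p q r) (some j)) ^ 2 ^ q i := by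
  have hx : (FreeGroup.of (some i) ^ 2 ^ p i *
      (FreeGroup.of (some j) ^ 2 ^ q i)⁻¹ : FreeGroup (Option (Fin n)))
      ∈ echinusRels n hn p q r := Or.inl (Or.inr ⟨i, j, hij, rfl⟩)
  have := rel_one (p := p) (q := q) (r := r) hx
  rw [map_mul, map_inv, map_pow, map_pow] at this
  exact mul_inv_eq_one.mp this

lemma R3 :
    (PresentedGroup.of (rels := echinusRels n hn p q r) none)⁻¹ *
      (PresentedGroup.of (rels := echinusRels n hn p q r)
        (some ⟨n - 1, Nat.sub_lt hn Nat.one_pos⟩)) ^ 2 ^ p ⟨n - 1, Nat.sub_lt hn Nat.one_pos⟩ *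
      PresentedGroup.of none =
    (PresentedGroup.of (rels := echinusRels n hn p q r) (some ⟨0, hn⟩)) ^
      2 ^ q ⟨n - 1, Nat.sub_lt hn Nat.one_pos⟩ := by
  have hx : ((FreeGroup.of none)⁻¹ *
      FreeGroup.of (some ⟨n - 1, Nat.sub_lt hn Nat.one_pos⟩) ^
        2 ^ p ⟨n - 1, Nat.sub_lt hn Nat.one_pos⟩ *
      FreeGroup.of none *
      (FreeGroup.of (some ⟨0, hn⟩) ^ 2 ^ q ⟨n - 1, Nat.sub_lt hn Nat.one_pos⟩)⁻¹ :
      FreeGroup (Option (Fin n))) ∈ echinusRels n hn p q r := Or.inr rfl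
  have := rel_one (p := p) (q := q) (r := r) hx
  rw [map_mul, map_mul, map_mul, map_inv, map_inv, map_pow, map_pow] at this
  exact mul_inv_eq_one.mp this

end Ech

namespace Ech

variable (n : ℕ) (hn : 0 < n) (p q r : Fin n → ℕ)

/-- generator image in the abelianization -/
def B (j : Fin n) : Abelianization (PresentedGroup (echinusRels n hn p q r)) :=
  Abelianization.of (PresentedGroup.of (some j))

variable {n hn p q r}

lemma helper_eq_one {G : Type*} [Group G] (x : G) (s t : ℕ) (hs : s ≠ 0)
    (hx1 : x = x ^ 2 ^ s) (hx2 : x ^ 2 ^ t = 1) : x = 1 := by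
  have h1 : (1 : ℕ) ≤ 2 ^ s := Nat.one_le_two_pow
  have hk : x ^ (2 ^ s - 1) = 1 := by
    have : x ^ (2 ^ s - 1) * x = 1 * x := by
      rw [one_mul, ← pow_succ, Nat.sub_add_cancel h1, ← hx1]
    exact mul_right_cancel this
  have hodd : Odd (2 ^ s - 1) :=
    Nat.Even.sub_odd h1 (Nat.even_pow.mpr ⟨even_two, hs⟩) odd_one
  have hco : Nat.Coprime (2 ^ t) (2 ^ s - 1) :=
    Nat.Coprime.pow_left t (Nat.coprime_two_left.2 hodd)
  have d1 : orderOf x ∣ 2 ^ t := orderOf_dvd_of_pow_eq_one hx2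
  have d2 : orderOf x ∣ 2 ^ s - 1 := orderOf_dvd_of_pow_eq_one hk
  exact orderOf_eq_one_iff.mp (Nat.eq_one_of_dvd_coprimes hco d1 d2)

lemma AB1 (j : Fin n) : B n hn p q r j ^ 2 ^ r j = 1 := by
  have h2 := congrArg Abelianization.of (@R1 n hn p q r j)
  rw [map_pow, map_one] at h2
  exact h2

lemma AB2 (i j : Fin n) (hij : (i : ℕ) + 1 = (j : ℕ)) :
    B n hn p q r i ^ 2 ^ p i = B n hn p q r j ^ 2 ^ q i := by
  have h2 := congrArg Abelianization.of (@R2 n hn p q r i j hij)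
  rw [map_pow, map_pow] at h2
  exact h2

lemma AB3 : B n hn p q r ⟨n - 1, Nat.sub_lt hn Nat.one_pos⟩ ^
      2 ^ p ⟨n - 1, Nat.sub_lt hn Nat.one_pos⟩ =
    B n hn p q r ⟨0, hn⟩ ^ 2 ^ q ⟨n - 1, Nat.sub_lt hn Nat.one_pos⟩ := by
  have h2 := congrArg Abelianization.of (@R3 n hn p q r)
  rw [map_mul, map_mul, map_inv, map_pow, map_pow] at h2
  simp only [B]
  rw [← h2]
  set X := Abelianization.of (PresentedGroup.of (rels := echinusRels n hn p q r) none)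
  set Y := Abelianization.of (PresentedGroup.of (rels := echinusRels n hn p q r)
    (some ⟨n - 1, Nat.sub_lt hn Nat.one_pos⟩)) ^ 2 ^ p ⟨n - 1, Nat.sub_lt hn Nat.one_pos⟩
  rw [mul_comm X⁻¹ Y, mul_assoc, inv_mul_cancel, mul_one]

lemma sum_mod (hn : 0 < n) (f : Fin n → ℕ) :
    ∑ i ∈ Finset.range n, f ⟨i % n, Nat.mod_lt i hn⟩ = ∑ i, f i := by
  rw [← Fin.sum_univ_eq_sum_range (fun i => f ⟨i % n, Nat.mod_lt i hn⟩) n]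
  apply Finset.sum_congr rfl
  intro i _
  congr 1
  exact Fin.ext (by simp [Nat.mod_eq_of_lt i.isLt])

lemma mk_mod (hn : 0 < n) (m : ℕ) (hm : m < n) :
    (⟨m % n, Nat.mod_lt m hn⟩ : Fin n) = ⟨m, hm⟩ :=
  Fin.ext (by simp [Nat.mod_eq_of_lt hm])

lemma sum_split (N : ℕ) (hN : 0 < N) (f : ℕ → ℕ) :
    ∑ i ∈ Finset.range N, f i = ∑ i ∈ Finset.range (N - 1), f i + f (N - 1) := by
  obtain ⟨m, rfl⟩ : ∃ m, N = m + 1 := ⟨N - 1, by omega⟩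
  simp [Finset.sum_range_succ]

lemma allB_one_q (hq : ∀ i, q i = 0) (hp : ∑ i, p i ≠ 0) : ∀ j, B n hn p q r j = 1 := by
  have chain : ∀ m (hm : m + 1 < n), B n hn p q r ⟨m + 1, hm⟩ =
      B n hn p q r ⟨m, Nat.lt_of_succ_lt hm⟩ ^ 2 ^ p ⟨m, Nat.lt_of_succ_lt hm⟩ := by
    intro m hm
    have h := @AB2 n hn p q r ⟨m, Nat.lt_of_succ_lt hm⟩ ⟨m + 1, hm⟩ rfl
    rw [hq ⟨m, Nat.lt_of_succ_lt hm⟩, pow_zero, pow_one] at h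
    exact h.symm
  have claim : ∀ m (hm : m < n), B n hn p q r ⟨m, hm⟩ =
      B n hn p q r ⟨0, hn⟩ ^ 2 ^ (∑ i ∈ Finset.range m, p ⟨i % n, Nat.mod_lt i hn⟩) := by
    intro m
    induction m with
    | zero => intro hm; rw [Finset.sum_range_zero, pow_zero, pow_one]
    | succ m ih =>
      intro hm
      have hm' : m < n := Nat.lt_of_succ_lt hm
      rw [chain m hm, ih hm', ← pow_mul, ← pow_add, Finset.sum_range_succ, mk_mod hn m hm']
  have hlast : n - 1 < n := Nat.sub_lt hn Nat.one_pos
  have hwrap : B n hn p q r ⟨0, hn⟩ =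
      B n hn p q r ⟨n - 1, hlast⟩ ^ 2 ^ p ⟨n - 1, hlast⟩ := by
    have h := @AB3 n hn p q r
    rw [hq ⟨n - 1, hlast⟩, pow_zero, pow_one] at h
    exact h.symm
  have hsum : (∑ i ∈ Finset.range (n - 1), p ⟨i % n, Nat.mod_lt i hn⟩) + p ⟨n - 1, hlast⟩
      = ∑ i, p i := by
    rw [← sum_mod hn p, sum_split n hn, mk_mod hn (n - 1) hlast]
  have h0 : B n hn p q r ⟨0, hn⟩ = B n hn p q r ⟨0, hn⟩ ^ 2 ^ (∑ i, p i) := by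
    conv_lhs => rw [hwrap, claim (n - 1) hlast, ← pow_mul, ← pow_add, hsum]
  have hB0 : B n hn p q r ⟨0, hn⟩ = 1 :=
    helper_eq_one _ (∑ i, p i) (r ⟨0, hn⟩) hp h0 (AB1 ⟨0, hn⟩)
  intro j
  have := claim j.1 j.2
  rw [hB0, one_pow] at this
  simpa using this

lemma allB_one_p (hp : ∀ i, p i = 0) (hq : ∑ i, q i ≠ 0) : ∀ j, B n hn p q r j = 1 := by
  have chain : ∀ m (hm : m + 1 < n), B n hn p q r ⟨m, Nat.lt_of_succ_lt hm⟩ =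
      B n hn p q r ⟨m + 1, hm⟩ ^ 2 ^ q ⟨m, Nat.lt_of_succ_lt hm⟩ := by
    intro m hm
    have h := @AB2 n hn p q r ⟨m, Nat.lt_of_succ_lt hm⟩ ⟨m + 1, hm⟩ rfl
    rw [hp ⟨m, Nat.lt_of_succ_lt hm⟩, pow_zero, pow_one] at h
    exact h
  have hlast : n - 1 < n := Nat.sub_lt hn Nat.one_pos
  have hwrap : B n hn p q r ⟨n - 1, hlast⟩ =
      B n hn p q r ⟨0, hn⟩ ^ 2 ^ q ⟨n - 1, hlast⟩ := by
    have h := @AB3 n hn p q r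
    rw [hp ⟨n - 1, hlast⟩, pow_zero, pow_one] at h
    exact h
  have claim : ∀ m (hm : m < n), B n hn p q r ⟨0, hn⟩ =
      B n hn p q r ⟨m, hm⟩ ^ 2 ^ (∑ i ∈ Finset.range m, q ⟨i % n, Nat.mod_lt i hn⟩) := by
    intro m
    induction m with
    | zero => intro hm; rw [Finset.sum_range_zero, pow_zero, pow_one]
    | succ m ih =>
      intro hm
      have hm' : m < n := Nat.lt_of_succ_lt hm
      rw [ih hm', chain m hm, ← pow_mul, ← pow_add, Finset.sum_range_succ, mk_mod hn m hm']
      exact congrArg (fun e => B n hn p q r ⟨m + 1, hm⟩ ^ 2 ^ e) (Nat.add_comm _ _)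
  have hsum : q ⟨n - 1, hlast⟩ + (∑ i ∈ Finset.range (n - 1), q ⟨i % n, Nat.mod_lt i hn⟩)
      = ∑ i, q i := by
    rw [← sum_mod hn q, sum_split n hn, mk_mod hn (n - 1) hlast, Nat.add_comm]
  have h0 : B n hn p q r ⟨0, hn⟩ = B n hn p q r ⟨0, hn⟩ ^ 2 ^ (∑ i, q i) := by
    conv_lhs => rw [claim (n - 1) hlast, hwrap, ← pow_mul, ← pow_add, hsum]
  have hB0 : B n hn p q r ⟨0, hn⟩ = 1 :=
    helper_eq_one _ (∑ i, q i) (r ⟨0, hn⟩) hq h0 (AB1 ⟨0, hn⟩)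
  have down : ∀ k m (hm : m < n), m + k + 1 = n → B n hn p q r ⟨m, hm⟩ = 1 := by
    intro k
    induction k with
    | zero =>
      intro m hm hk
      have : (⟨m, hm⟩ : Fin n) = ⟨n - 1, hlast⟩ := Fin.ext (by simp; omega)
      rw [this, hwrap, hB0, one_pow]
    | succ k ih =>
      intro m hm hk
      have hm1 : m + 1 < n := by omega
      rw [chain m hm1, ih (m + 1) hm1 (by omega), one_pow]
  intro j
  have := down (n - 1 - j.1) j.1 j.2 (by omega)
  simpa using this

/-- generators to `Multiplicative ℤ`: `t ↦ 1`, `b_j ↦ 0`. -/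
def fI : Option (Fin n) → Multiplicative ℤ := fun x =>
  Option.elim x (Multiplicative.ofAdd 1) (fun _ => 1)

@[simp] lemma fI_none : fI (n := n) none = Multiplicative.ofAdd 1 := rfl
@[simp] lemma fI_some (j : Fin n) : fI (some j) = 1 := rfl

lemma fI_check : ∀ x ∈ echinusRels n hn p q r, FreeGroup.lift fI x = 1 := by
  intro x hx
  rcases hx with (⟨j, rfl⟩ | ⟨i, j, hij, rfl⟩) | rfl
  · rw [map_pow, FreeGroup.lift_apply_of, fI_some, one_pow]
  · rw [map_mul, map_inv, map_pow, map_pow, FreeGroup.lift_apply_of, FreeGroup.lift_apply_of,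
      fI_some, fI_some, one_pow, one_pow, mul_inv_cancel]
  · rw [map_mul, map_mul, map_mul, map_inv, map_inv, map_pow, map_pow,
      FreeGroup.lift_apply_of, FreeGroup.lift_apply_of, FreeGroup.lift_apply_of, fI_some, fI_some, fI_none,
      one_pow, one_pow, inv_one, mul_one, mul_one, inv_mul_cancel]

lemma equiv_of_allB (hall : ∀ j, B n hn p q r j = 1) :
    Nonempty (Abelianization (PresentedGroup (echinusRels n hn p q r)) ≃* Multiplicative ℤ) := by
  set φ : PresentedGroup (echinusRels n hn p q r) →* Multiplicative ℤ :=
    PresentedGroup.toGroup (@fI_check n hn p q r) with hφ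
  set φ' := Abelianization.lift φ with hφ'
  set T : Abelianization (PresentedGroup (echinusRels n hn p q r)) :=
    Abelianization.of (PresentedGroup.of (rels := echinusRels n hn p q r) none) with hT
  set ψ := zpowersHom (Abelianization (PresentedGroup (echinusRels n hn p q r))) T with hψ
  have hφT : φ' T = Multiplicative.ofAdd 1 := by
    rw [hT, hφ', Abelianization.lift_apply_of, hφ, PresentedGroup.toGroup.of, fI_none]
  refine ⟨MonoidHom.toMulEquiv φ' ψ ?_ ?_⟩
  · apply Abelianization.hom_ext
    apply PresentedGroup.ext
    intro x
    show ψ (φ' (Abelianization.of (PresentedGroup.of x))) = Abelianization.of (PresentedGroup.of x)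
    cases x with
    | none =>
      rw [← hT, hφT]
      show T ^ ((Multiplicative.ofAdd (1 : ℤ)).toAdd) = T
      simp
    | some j =>
      rw [hφ', Abelianization.lift_apply_of, hφ, PresentedGroup.toGroup.of, fI_some, map_one]
      exact (hall j).symm
  · apply MonoidHom.ext_mint
    show φ' (ψ (Multiplicative.ofAdd 1)) = Multiplicative.ofAdd 1
    rw [hψ, zpowersHom_apply]
    simp only [toAdd_ofAdd, zpow_one]
    exact hφT

/-- generators to `Multiplicative (ZMod 2)` determined by `ε`. -/
def fZ (ε : Fin n → ZMod 2) : Option (Fin n) → Multiplicative (ZMod 2) := fun x =>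
  Option.elim x 1 (fun j => Multiplicative.ofAdd (ε j))

@[simp] lemma fZ_none (ε : Fin n → ZMod 2) : fZ ε none = 1 := rfl
@[simp] lemma fZ_some (ε : Fin n → ZMod 2) (j : Fin n) :
    fZ ε (some j) = Multiplicative.ofAdd (ε j) := rfl

lemma pow_ofAdd (a : ZMod 2) (k : ℕ) :
    (Multiplicative.ofAdd a) ^ (2 : ℕ) ^ k = Multiplicative.ofAdd ((2 : ZMod 2) ^ k * a) := by
  rw [← ofAdd_nsmul]
  congr 1
  rw [nsmul_eq_mul]
  push_cast
  ring

lemma fZ_check (hr : ∀ i, 1 ≤ r i) (ε : Fin n → ZMod 2)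
    (hc2 : ∀ i j : Fin n, (i : ℕ) + 1 = (j : ℕ) →
      (2 : ZMod 2) ^ (p i) * ε i = (2 : ZMod 2) ^ (q i) * ε j)
    (hc3 : (2 : ZMod 2) ^ (p ⟨n - 1, Nat.sub_lt hn Nat.one_pos⟩) *
        ε ⟨n - 1, Nat.sub_lt hn Nat.one_pos⟩ =
      (2 : ZMod 2) ^ (q ⟨n - 1, Nat.sub_lt hn Nat.one_pos⟩) * ε ⟨0, hn⟩) :
    ∀ x ∈ echinusRels n hn p q r, FreeGroup.lift (fZ ε) x = 1 := by
  have h2 : (2 : ZMod 2) = 0 := by decide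
  intro x hx
  rcases hx with (⟨j, rfl⟩ | ⟨i, j, hij, rfl⟩) | rfl
  · rw [map_pow, FreeGroup.lift_apply_of, fZ_some, pow_ofAdd, h2,
      zero_pow (by have := hr j; omega), zero_mul]
    rfl
  · rw [map_mul, map_inv, map_pow, map_pow, FreeGroup.lift_apply_of, FreeGroup.lift_apply_of,
      fZ_some, fZ_some, pow_ofAdd, pow_ofAdd, hc2 i j hij, mul_inv_cancel]
  · rw [map_mul, map_mul, map_mul, map_inv, map_inv, map_pow, map_pow,
      FreeGroup.lift_apply_of, FreeGroup.lift_apply_of, FreeGroup.lift_apply_of, fZ_some, fZ_some, fZ_none,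
      inv_one, one_mul, mul_one, pow_ofAdd, pow_ofAdd, hc3, mul_inv_cancel]

lemma no_equiv (hr : ∀ i, 1 ≤ r i) (ε : Fin n → ZMod 2)
    (hc2 : ∀ i j : Fin n, (i : ℕ) + 1 = (j : ℕ) →
      (2 : ZMod 2) ^ (p i) * ε i = (2 : ZMod 2) ^ (q i) * ε j)
    (hc3 : (2 : ZMod 2) ^ (p ⟨n - 1, Nat.sub_lt hn Nat.one_pos⟩) *
        ε ⟨n - 1, Nat.sub_lt hn Nat.one_pos⟩ =
      (2 : ZMod 2) ^ (q ⟨n - 1, Nat.sub_lt hn Nat.one_pos⟩) * ε ⟨0, hn⟩)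
    (j0 : Fin n) (hj0 : ε j0 = 1) :
    ¬ Nonempty (Abelianization (PresentedGroup (echinusRels n hn p q r)) ≃* Multiplicative ℤ) := by
  rintro ⟨e⟩
  have hx : B n hn p q r j0 ^ 2 ^ r j0 = 1 := AB1 j0
  have hex : (e (B n hn p q r j0)) ^ 2 ^ r j0 = 1 := by
    rw [← map_pow, hx, map_one]
  have he1 : e (B n hn p q r j0) = 1 := by
    have ht := congrArg Multiplicative.toAdd hex
    rw [toAdd_pow, toAdd_one] at ht
    have : (e (B n hn p q r j0)).toAdd = 0 := by
      rcases mul_eq_zero.mp ht with h | h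
      · exact absurd h (by exact_mod_cast pow_ne_zero _ two_ne_zero)
      · exact h
    have := congrArg Multiplicative.ofAdd this
    simpa using this
  have hB1 : B n hn p q r j0 = 1 := by
    apply e.injective
    rw [he1, map_one]
  set χ := Abelianization.lift (PresentedGroup.toGroup (fZ_check hr ε hc2 hc3)) with hχ
  have := congrArg χ hB1
  rw [map_one, hχ, B, Abelianization.lift_apply_of, PresentedGroup.toGroup.of, fZ_some, hj0] at this
  exact absurd this (by decide)

/-- periodic extension of a `Fin n`-indexed family -/
def pnat (hn : 0 < n) (f : Fin n → ℕ) (i : ℕ) : ℕ := f ⟨i % n, Nat.mod_lt i hn⟩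

lemma pnat_congr (hn : 0 < n) (f : Fin n → ℕ) {u v : ℕ} (h : u % n = v % n) :
    pnat hn f u = pnat hn f v := by
  unfold pnat; congr 1; exact Fin.ext h

lemma pnat_fin (hn : 0 < n) (f : Fin n → ℕ) (i : Fin n) : pnat hn f (i : ℕ) = f i := by
  unfold pnat
  congr 1
  exact Fin.ext (by simp [Nat.mod_eq_of_lt i.isLt])

open Classical in
/-- the characteristic function (mod 2) of the residues of the interval `[j+1, e]` -/
noncomputable def epsN (n : ℕ) (j e : ℕ) (v : ℕ) : ZMod 2 :=
  if ∃ w ∈ Finset.Icc (j + 1) e, w % n = v % n then 1 else 0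

lemma epsN_congr {j e u v : ℕ} (h : u % n = v % n) : epsN n j e u = epsN n j e v := by
  unfold epsN; rw [h]

lemma epsN_one {j e w : ℕ} (h1 : j + 1 ≤ w) (h2 : w ≤ e) : epsN n j e w = 1 := by
  unfold epsN
  exact if_pos ⟨w, Finset.mem_Icc.mpr ⟨h1, h2⟩, rfl⟩

lemma epsN_zero_hi (hn : 0 < n) {j e v : ℕ} (h1 : e < v) (h2 : v ≤ j + n) :
    epsN n j e v = 0 := by
  unfold epsN
  apply if_neg
  rintro ⟨w, hw, hmod⟩
  rw [Finset.mem_Icc] at hw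
  have hwv : w < v := lt_of_le_of_lt hw.2 h1
  have hdvd : n ∣ v - w := (Nat.modEq_iff_dvd' hwv.le).mp hmod
  have := Nat.le_of_dvd (by omega) hdvd
  omega

lemma epsN_zero_j (hn : 0 < n) {j e : ℕ} (he : e < j + n) : epsN n j e j = 0 := by
  unfold epsN
  apply if_neg
  rintro ⟨w, hw, hmod⟩
  rw [Finset.mem_Icc] at hw
  have hjw : j < w := by omega
  have hdvd : n ∣ w - j := (Nat.modEq_iff_dvd' hjw.le).mp hmod.symm
  have := Nat.le_of_dvd (by omega) hdvd
  omega

lemma exists_eps (hp : ∑ i, p i ≠ 0) (hq : ∑ i, q i ≠ 0) :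
    ∃ ε : Fin n → ZMod 2,
      (∀ i j : Fin n, (i : ℕ) + 1 = (j : ℕ) →
        (2 : ZMod 2) ^ (p i) * ε i = (2 : ZMod 2) ^ (q i) * ε j) ∧
      ((2 : ZMod 2) ^ (p ⟨n - 1, Nat.sub_lt hn Nat.one_pos⟩) *
          ε ⟨n - 1, Nat.sub_lt hn Nat.one_pos⟩ =
        (2 : ZMod 2) ^ (q ⟨n - 1, Nat.sub_lt hn Nat.one_pos⟩) * ε ⟨0, hn⟩) ∧
      ∃ j0 : Fin n, ε j0 = 1 := by
  have h2 : (2 : ZMod 2) = 0 := by decide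
  obtain ⟨i1, -, hi1⟩ := Finset.exists_ne_zero_of_sum_ne_zero hp
  obtain ⟨i2, -, hi2⟩ := Finset.exists_ne_zero_of_sum_ne_zero hq
  set pn := pnat hn p with hpn
  set qn := pnat hn q with hqn
  -- choose a with pn a ≠ 0, b with qn b ≠ 0, b < a ≤ b + n
  set b : ℕ := (i2 : ℕ) with hb
  set a : ℕ := if (i2 : ℕ) < (i1 : ℕ) then (i1 : ℕ) else (i1 : ℕ) + n with ha
  have hba : b < a ∧ a ≤ b + n := by
    have h1 := i1.isLt
    have h2 := i2.isLt
    rw [hb, ha]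
    split <;> omega
  have hpa : pn a ≠ 0 := by
    have hmod : a % n = (i1 : ℕ) := by
      rw [ha]; split
      · exact Nat.mod_eq_of_lt i1.isLt
      · rw [Nat.add_mod_right]; exact Nat.mod_eq_of_lt i1.isLt
    rw [hpn, pnat]
    have : (⟨a % n, Nat.mod_lt a hn⟩ : Fin n) = i1 := Fin.ext hmod
    rw [this]; exact hi1
  have hqb : qn b ≠ 0 := by
    rw [hqn, hb, pnat_fin hn q i2]; exact hi2
  -- the maximal index in [b, a) with qn ≠ 0
  set T : Finset ℕ := (Finset.Ico b a).filter (fun w => qn w ≠ 0) with hT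
  have hbT : b ∈ T := by
    rw [hT, Finset.mem_filter, Finset.mem_Ico]
    exact ⟨⟨le_refl b, hba.1⟩, hqb⟩
  obtain ⟨j, hjT, hjmax'⟩ : ∃ x ∈ T, ∀ w ∈ T, w ≤ x :=
    ⟨T.max' ⟨b, hbT⟩, T.max'_mem _, fun w hw => Finset.le_max' T w hw⟩
  rw [hT, Finset.mem_filter, Finset.mem_Ico] at hjT
  have hqj : qn j ≠ 0 := hjT.2
  have hjb : b ≤ j := hjT.1.1
  have hja : j < a := hjT.1.2
  have hjmax : ∀ w, b ≤ w → w < a → qn w ≠ 0 → w ≤ j := by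
    intro w h1 h2 h3
    exact hjmax' w (by rw [hT, Finset.mem_filter, Finset.mem_Ico]; exact ⟨⟨h1, h2⟩, h3⟩)
  -- first non-equality edge after j
  have H : ∃ m, ¬(pn (j + 1 + m) = 0 ∧ qn (j + 1 + m) = 0) := by
    refine ⟨a - (j + 1), ?_⟩
    have : j + 1 + (a - (j + 1)) = a := by omega
    rw [this]
    tauto
  set d := Nat.find H with hd
  set e := j + 1 + d with he
  have hespec : ¬(pn e = 0 ∧ qn e = 0) := Nat.find_spec H
  have hmin : ∀ m, m < d → pn (j + 1 + m) = 0 ∧ qn (j + 1 + m) = 0 := by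
    intro m hm
    by_contra hcon
    exact absurd (Nat.find_min H hm) (by tauto)
  have hea : e ≤ a := by
    have : d ≤ a - (j + 1) := Nat.find_le (by
      have : j + 1 + (a - (j + 1)) = a := by omega
      rw [this]; tauto)
    omega
  have hen : e ≤ j + n := by
    have hq' : qn (j + 1 + (n - 1)) ≠ 0 := by
      have : j + 1 + (n - 1) = j + n := by omega
      rw [this, hqn]
      have hmod : (j + n) % n = j % n := by rw [Nat.add_comm j n, Nat.add_mod_left]
      rw [pnat_congr hn q hmod]
      exact hqj
    have : d ≤ n - 1 := Nat.find_le (by tauto)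
    omega
  have hpe : pn e ≠ 0 := by
    by_contra hpe0
    have hqe : qn e ≠ 0 := by tauto
    rcases Nat.lt_or_ge e a with hlt | hge
    · have : e ≤ j := hjmax e (by omega) hlt hqe
      omega
    · have : e = a := by omega
      rw [this] at hpe0
      exact hpa hpe0
  -- the assignment
  set εn : ℕ → ZMod 2 := epsN n j e with hεn
  -- the core computation on one period
  have core : ∀ k, j ≤ k → k < j + n →
      (2 : ZMod 2) ^ (pn k) * εn k = (2 : ZMod 2) ^ (qn k) * εn (k + 1) := by
    intro k hk1 hk2
    rcases Nat.eq_or_lt_of_le hk1 with rfl | hk1'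
    · -- k = j
      rw [h2, zero_pow hqj, zero_mul]
      rcases Nat.lt_or_ge e (j + n) with hlt | hge
      · rw [hεn, epsN_zero_j hn hlt, mul_zero]
      · have hej : e = j + n := by omega
        have hj0 : pn j ≠ 0 := by
          rw [hpn, pnat_congr hn p (show j % n = e % n by
            rw [hej, Nat.add_comm j n, Nat.add_mod_left])]
          exact hpe
        rw [zero_pow hj0, zero_mul]
    · have hk3 : j + 1 ≤ k := hk1'
      rcases Nat.lt_or_ge k e with hke | hke
      · -- equality edge
        have heq := hmin (k - (j + 1)) (by omega)
        have hkk : j + 1 + (k - (j + 1)) = k := by omega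
        rw [hkk] at heq
        rw [heq.1, heq.2, pow_zero, one_mul, one_mul, hεn,
          epsN_one hk3 (by omega), epsN_one (by omega) (by omega)]
      · rcases Nat.eq_or_lt_of_le hke with rfl | hke'
        · -- k = e  (note k < j + n here)
          rw [h2, zero_pow hpe, zero_mul, hεn, epsN_zero_hi hn (by omega) (by omega), mul_zero]
        · -- e < k < j + n
          rw [hεn, epsN_zero_hi hn (by omega) (by omega),
            epsN_zero_hi hn (by omega) (by omega), mul_zero, mul_zero]
  -- extend to all naturals
  have CNge : ∀ m : ℕ, (2 : ZMod 2) ^ (pn (j + m)) * εn (j + m) =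
      (2 : ZMod 2) ^ (qn (j + m)) * εn (j + m + 1) := by
    intro m
    induction m using Nat.strong_induction_on with
    | _ m ih =>
      rcases Nat.lt_or_ge m n with hm | hm
      · exact core (j + m) (by omega) (by omega)
      · have hprev := ih (m - n) (by omega)
        have e1 : (j + (m - n)) % n = (j + m) % n := by
          have : j + m = (j + (m - n)) + n := by omega
          rw [this, Nat.add_mod_right]
        have e2 : (j + (m - n) + 1) % n = (j + m + 1) % n := by
          have : j + m + 1 = (j + (m - n) + 1) + n := by omega
          rw [this, Nat.add_mod_right]
        rw [hpn, hqn, hεn] at hprev ⊢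
        rw [← pnat_congr hn p e1, ← pnat_congr hn q e1, ← epsN_congr e1, ← epsN_congr e2]
        exact hprev
  have CN : ∀ i : ℕ, (2 : ZMod 2) ^ (pn i) * εn i =
      (2 : ZMod 2) ^ (qn i) * εn (i + 1) := by
    intro i
    have hk : j ≤ i + n * j := by
      have : j ≤ n * j := Nat.le_mul_of_pos_left j hn
      omega
    have := CNge (i + n * j - j)
    have hkk : j + (i + n * j - j) = i + n * j := by omega
    rw [hkk] at this
    have e1 : (i + n * j) % n = i % n := by
      have : n * j = j * n := Nat.mul_comm n j
      rw [this, Nat.add_mul_mod_self_right]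
    have e2 : (i + n * j + 1) % n = (i + 1) % n := by
      have : i + n * j + 1 = (i + 1) + j * n := by ring
      rw [this, Nat.add_mul_mod_self_right]
    rw [hpn, hqn, hεn] at this ⊢
    rw [← pnat_congr hn p e1, ← pnat_congr hn q e1, ← epsN_congr e1, ← epsN_congr e2]
    exact this
  -- package the result
  refine ⟨fun v => εn (v : ℕ), ?_, ?_, ?_⟩
  · intro i j' hij
    have := CN (i : ℕ)
    rw [hpn, hqn, pnat_fin hn p i, pnat_fin hn q i, hij] at this
    exact this
  · have := CN (n - 1)
    rw [hpn, hqn] at this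
    have hl : n - 1 < n := Nat.sub_lt hn Nat.one_pos
    have ep : pnat hn p (n - 1) = p ⟨n - 1, hl⟩ := by
      unfold pnat; congr 1; exact Fin.ext (by simp [Nat.mod_eq_of_lt hl])
    have eq' : pnat hn q (n - 1) = q ⟨n - 1, hl⟩ := by
      unfold pnat; congr 1; exact Fin.ext (by simp [Nat.mod_eq_of_lt hl])
    rw [ep, eq'] at this
    have e0 : (n - 1 + 1) % n = ((⟨0, hn⟩ : Fin n) : ℕ) % n := by
      have : n - 1 + 1 = n := by omega
      rw [this]
      show n % n = 0 % n
      rw [Nat.mod_self, Nat.zero_mod]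
    rw [hεn, epsN_congr e0] at this
    exact this
  · refine ⟨⟨(j + 1) % n, Nat.mod_lt _ hn⟩, ?_⟩
    show εn (((j + 1) % n : ℕ)) = 1
    have e1 : ((j + 1) % n) % n = (j + 1) % n := Nat.mod_mod_of_dvd _ dvd_rfl
    rw [hεn, epsN_congr e1, epsN_one (le_refl _) (by omega)]

end Ech

theorem stmt9 (n : ℕ) (hn : 0 < n) (p q r : Fin n → ℕ) (hr : ∀ i, 1 ≤ r i) :
    Nonempty (Abelianization (PresentedGroup (echinusRels n hn p q r)) ≃* Multiplicative ℤ) ↔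
      ((∑ i, p i = 0 ∧ ∑ i, q i ≠ 0) ∨ (∑ i, p i ≠ 0 ∧ ∑ i, q i = 0)) := by
  constructor
  · intro he
    by_contra hcon
    have hcase : (∑ i, p i = 0 ∧ ∑ i, q i = 0) ∨ (∑ i, p i ≠ 0 ∧ ∑ i, q i ≠ 0) := by tauto
    rcases hcase with ⟨hp0, hq0⟩ | ⟨hp0, hq0⟩
    · have hp' : ∀ i, p i = 0 := fun i =>
        (Finset.sum_eq_zero_iff.mp hp0) i (Finset.mem_univ i)
      have hq' : ∀ i, q i = 0 := fun i =>
        (Finset.sum_eq_zero_iff.mp hq0) i (Finset.mem_univ i)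
      refine absurd he (Ech.no_equiv hr (fun _ => (1 : ZMod 2)) ?_ ?_ ⟨0, hn⟩ rfl)
      · intro i j hij
        rw [hp' i, hq' i]
      · rw [hp' ⟨n - 1, Nat.sub_lt hn Nat.one_pos⟩, hq' ⟨n - 1, Nat.sub_lt hn Nat.one_pos⟩]
    · obtain ⟨ε, hc2, hc3, j0, hj0⟩ := Ech.exists_eps (hn := hn) hp0 hq0
      exact absurd he (Ech.no_equiv hr ε hc2 hc3 j0 hj0)
  · rintro (⟨hp0, hq0⟩ | ⟨hp0, hq0⟩)
    · have hp' : ∀ i, p i = 0 := fun i =>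
        (Finset.sum_eq_zero_iff.mp hp0) i (Finset.mem_univ i)
      exact Ech.equiv_of_allB (Ech.allB_one_p hp' hq0)
    · have hq' : ∀ i, q i = 0 := fun i =>
        (Finset.sum_eq_zero_iff.mp hq0) i (Finset.mem_univ i)
      exact Ech.equiv_of_allB (Ech.allB_one_q hq' hp0)
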